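/- Let m ≥ 9 and S = ⟨m, m+1, ..., 2m-5⟩. Then |λ(S)| = 5m − 13, where |λ(S)| = #{(u,x) : u ∈ S, x ∉ S, x ≥ 0, u < x}. -/

import Mathlib

/-- The size of the partition associated to a numerical set `T`. -/
noncomputable def lamSize (T : Set ℕ) : ℕ :=
  {p : ℕ × ℕ | p.1 ∈ T ∧ p.2 ∉ T ∧ p.1 < p.2}.ncard

lemma high_mem (m : ℕ) (hm : 9 ≤ m) : ∀ n, 2 * m ≤ n →
    n ∈ AddSubmonoid.closure (Set.Icc m (2 * m - 5)) := by
  intro n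
  induction n using Nat.strong_induction_on with
  | _ n ih =>
    intro hn
    by_cases h : n ≤ 4 * m - 10
    · have : n = min (2 * m - 5) (n - m) + (n - min (2 * m - 5) (n - m)) := by omega
      rw [this]
      exact add_mem (AddSubmonoid.subset_closure (by simp [Set.mem_Icc]; omega))
        (AddSubmonoid.subset_closure (by simp [Set.mem_Icc]; omega))
    · have : n = m + (n - m) := by omega
      rw [this]
      exact add_mem (AddSubmonoid.subset_closure (by simp [Set.mem_Icc]; omega))
        (ih (n - m) (by omega) (by omega))

lemma mem_char (m : ℕ) (hm : 9 ≤ m) (n : ℕ) :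
    n ∈ AddSubmonoid.closure (Set.Icc m (2 * m - 5)) ↔
      n = 0 ∨ (m ≤ n ∧ n ≤ 2 * m - 5) ∨ 2 * m ≤ n := by
  constructor
  · intro h
    induction h using AddSubmonoid.closure_induction with
    | mem x hx => simp [Set.mem_Icc] at hx; omega
    | zero => omega
    | add x y _ _ hx hy => omega
  · rintro (rfl | h | h)
    · exact zero_mem _
    · exact AddSubmonoid.subset_closure (by simp [Set.mem_Icc]; omega)
    · exact high_mem m hm n h

theorem stmt_10 (m : ℕ) (hm : 9 ≤ m)
    (S : Set ℕ)
    (hS : S = {n : ℕ | n ∈ AddSubmonoid.closure (Set.Icc m (2 * m - 5))}) :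
    lamSize S = 5 * m - 13 := by
  have hmem : ∀ n, n ∈ S ↔ n = 0 ∨ (m ≤ n ∧ n ≤ 2 * m - 5) ∨ 2 * m ≤ n := by
    intro n; rw [hS]; exact mem_char m hm n
  have hset : {p : ℕ × ℕ | p.1 ∈ S ∧ p.2 ∉ S ∧ p.1 < p.2} =
      ↑(({(0:ℕ)} : Finset ℕ) ×ˢ (Finset.Ico 1 m ∪ Finset.Ico (2*m-4) (2*m)) ∪
        (Finset.Ico m (2*m-4)) ×ˢ (Finset.Ico (2*m-4) (2*m))) := by
    ext ⟨u, x⟩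
    simp only [Set.mem_setOf_eq, hmem, Finset.coe_union, Set.mem_union, Finset.coe_product,
      Set.mem_prod, Finset.coe_singleton, Set.mem_singleton_iff, Finset.coe_Ico, Set.mem_Ico,
      Finset.coe_union, Set.mem_union]
    omega
  unfold lamSize
  rw [hset, Set.ncard_coe_finset]
  rw [Finset.card_union_of_disjoint, Finset.card_product, Finset.card_product,
    Finset.card_union_of_disjoint]
  · simp only [Finset.card_singleton, Nat.card_Ico]
    have h1 : 2*m - (2*m-4) = 4 := by omega
    have h2 : 2*m - 4 - m = m - 4 := by omega
    rw [h1, h2]; omega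
  · rw [Finset.disjoint_left]; intro a ha hb; simp at ha hb; omega
  · rw [Finset.disjoint_left]; rintro ⟨a, b⟩ ha hb
    simp at ha hb; omega
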